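/- arXiv:2302.10017 — 10 statements merged into one kernel-verified Lean document; each statement's English description precedes it below -/
import Mathlib

section
/- Let n m : ℕ, let K ⊆ (Fin n → ℝ) be a nonempty compact set, let F : (Fin n → ℝ) → (Fin n → ℝ) satisfy F(K) ⊆ K, let ψ : (Fin n → ℝ) → (Fin m → ℝ) be continuous on K, let g : (Fin m → ℝ) → (Fin m → ℝ), let x_g ∈ K and y_g : Fin m → ℝ. Assume: (i) for every y : Fin m → ℝ, the iterates g^[k](y) converge to y_g as k → ∞; (ii) ψ(F(x)) = g(ψ(x)) for every x ∈ K (stability condition 1); (iii) for every x ∈ K, ψ(x) = y_g implies x = x_g (stability condition 2). Then x_g is globally asymptotically stable on K: for every x ∈ K, the iterates F^[k](x) converge to x_g as k → ∞. -/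
open Filter Topology

theorem stmt0 (n m : ℕ) (K : Set (Fin n → ℝ)) (hKne : K.Nonempty) (hKc : IsCompact K)
    (F : (Fin n → ℝ) → (Fin n → ℝ)) (hF : Set.MapsTo F K K)
    (ψ : (Fin n → ℝ) → (Fin m → ℝ)) (hψ : ContinuousOn ψ K)
    (g : (Fin m → ℝ) → (Fin m → ℝ)) (x_g : Fin n → ℝ) (hxg : x_g ∈ K)
    (y_g : Fin m → ℝ)
    (hg : ∀ y : Fin m → ℝ, Tendsto (fun k => g^[k] y) atTop (𝓝 y_g))
    (hcond1 : ∀ x ∈ K, ψ (F x) = g (ψ x))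
    (hcond2 : ∀ x ∈ K, ψ x = y_g → x = x_g) :
    ∀ x ∈ K, Tendsto (fun k => F^[k] x) atTop (𝓝 x_g) := by
  intro x hx
  -- trajectory stays in K
  have hmem : ∀ k, F^[k] x ∈ K := by
    intro k
    induction k with
    | zero => simpa using hx
    | succ k ih => rw [Function.iterate_succ_apply']; exact hF ih
  -- semiconjugacy along the trajectory
  have hsemi : ∀ k, ψ (F^[k] x) = g^[k] (ψ x) := by
    intro k
    induction k with
    | zero => simp
    | succ k ih =>
      rw [Function.iterate_succ_apply', Function.iterate_succ_apply',
        hcond1 _ (hmem k), ih]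
  refine tendsto_of_subseq_tendsto fun ns hns => ?_
  obtain ⟨z, hzK, φ, hφ, hz⟩ := hKc.tendsto_subseq (x := fun k => F^[ns k] x) (fun k => hmem (ns k))
  refine ⟨φ, ?_⟩
  -- show z = x_g
  have hψz : Tendsto (fun k => ψ (F^[ns (φ k)] x)) atTop (𝓝 (ψ z)) := by
    have : Tendsto (fun k => F^[ns (φ k)] x) atTop (𝓝[K] z) :=
      tendsto_nhdsWithin_of_tendsto_nhds_of_eventually_within _ hz
        (Eventually.of_forall fun k => hmem (ns (φ k)))
    exact ((hψ z hzK).tendsto).comp this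
  have hψz' : Tendsto (fun k => ψ (F^[ns (φ k)] x)) atTop (𝓝 y_g) := by
    have : Tendsto (fun k => g^[ns (φ k)] (ψ x)) atTop (𝓝 y_g) :=
      (hg (ψ x)).comp ((hns.comp hφ.tendsto_atTop))
    simpa [hsemi] using this
  have hz_eq : z = x_g :=
    hcond2 z hzK (tendsto_nhds_unique hψz hψz')
  exact hz_eq ▸ hz
end

section
/- Let n m : ℕ, let K ⊆ (Fin n → ℝ), let F : (Fin n → ℝ) → (Fin n → ℝ), ψ : (Fin n → ℝ) → (Fin m → ℝ), g : (Fin m → ℝ) → (Fin m → ℝ), let x_g ∈ K and y_g : Fin m → ℝ. Assume: (i) g(y_g) = y_g (the goal is an equilibrium of the latent dynamics); (ii) ψ(F(x)) = g(ψ(x)) for every x ∈ K (stability condition 1); (iii) for every x ∈ K with x ≠ x_g, ψ(F(x)) ≠ ψ(x) (consecutive latent states along a task trajectory are distinct away from the goal). Then for every x ∈ K, ψ(x) = y_g implies x = x_g (stability condition 2). -/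
theorem stmt1 (n m : ℕ) (K : Set (Fin n → ℝ))
    (F : (Fin n → ℝ) → (Fin n → ℝ))
    (ψ : (Fin n → ℝ) → (Fin m → ℝ))
    (g : (Fin m → ℝ) → (Fin m → ℝ)) (x_g : Fin n → ℝ) (hxg : x_g ∈ K)
    (y_g : Fin m → ℝ)
    (hfix : g y_g = y_g)
    (hcond1 : ∀ x ∈ K, ψ (F x) = g (ψ x))
    (hsep : ∀ x ∈ K, x ≠ x_g → ψ (F x) ≠ ψ x) :
    ∀ x ∈ K, ψ x = y_g → x = x_g := by
  intro x hx hψ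
  by_contra h
  exact hsep x hx h (by rw [hcond1 x hx, hψ, hfix])
end

section
/- Let n m : ℕ, let K ⊆ (Fin n → ℝ) be a nonempty compact set, let F : (Fin n → ℝ) → (Fin n → ℝ) satisfy F(K) ⊆ K, let ψ : (Fin n → ℝ) → (Fin m → ℝ) be continuous on K, let g : (Fin m → ℝ) → (Fin m → ℝ), let x_g ∈ K and y_g : Fin m → ℝ. Assume (i) for every y the iterates g^[k](y) converge to y_g, (ii) ψ(F(x)) = g(ψ(x)) for every x ∈ K, and (iii) for every x ∈ K, ψ(x) = y_g implies x = x_g. Then ψ(x_g) = y_g, i.e. the latent mapping sends the task-space goal to the latent goal. -/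
open Filter Topology

theorem stmt4 (n m : ℕ) (K : Set (Fin n → ℝ)) (hKne : K.Nonempty) (hKc : IsCompact K)
    (F : (Fin n → ℝ) → (Fin n → ℝ)) (hF : Set.MapsTo F K K)
    (ψ : (Fin n → ℝ) → (Fin m → ℝ)) (hψ : ContinuousOn ψ K)
    (g : (Fin m → ℝ) → (Fin m → ℝ)) (x_g : Fin n → ℝ) (hxg : x_g ∈ K)
    (y_g : Fin m → ℝ)
    (hg : ∀ y : Fin m → ℝ, Tendsto (fun k => g^[k] y) atTop (𝓝 y_g))
    (hcond1 : ∀ x ∈ K, ψ (F x) = g (ψ x))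
    (hcond2 : ∀ x ∈ K, ψ x = y_g → x = x_g) :
    ψ x_g = y_g := by
  set a : ℕ → (Fin n → ℝ) := fun k => F^[k] x_g with ha
  have haK : ∀ k, a k ∈ K := fun k => Set.MapsTo.iterate hF k hxg
  have hcomm : ∀ k, ψ (a k) = g^[k] (ψ x_g) := by
    intro k
    induction k with
    | zero => simp [ha]
    | succ k ih =>
      have : a (k + 1) = F (a k) := Function.iterate_succ_apply' F k x_g
      rw [this, hcond1 _ (haK k), ih, Function.iterate_succ_apply']
  obtain ⟨x', hx'K, φ, hφ, hlim⟩ := hKc.tendsto_subseq haK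
  have h1 : Tendsto (fun k => ψ (a (φ k))) atTop (𝓝 (ψ x')) := by
    exact (hψ x' hx'K).tendsto.comp
      (tendsto_nhdsWithin_of_tendsto_nhds_of_eventually_within _ hlim
        (Eventually.of_forall fun k => haK (φ k)))
  have h2 : Tendsto (fun k => ψ (a (φ k))) atTop (𝓝 y_g) := by
    simp only [hcomm]
    exact (hg (ψ x_g)).comp hφ.tendsto_atTop
  have hx' : ψ x' = y_g := tendsto_nhds_unique h1 h2
  have := hcond2 x' hx'K hx'
  rw [← this, hx']
end

section
/- Let n m : ℕ, Δt : ℝ, and let ψ : (Fin n → ℝ) → (Fin m → ℝ), φ : (Fin m → ℝ) → (Fin n → ℝ), g : (Fin m → ℝ) → (Fin m → ℝ). Define F : (Fin n → ℝ) → (Fin n → ℝ) by F(x) = x + Δt • φ(ψ(x)), and assume ψ(F(x)) = g(ψ(x)) for every x. Then for any a b : Fin n → ℝ with ψ(a) = ψ(b), one has F^[k](a) - F^[k](b) = a - b for every k : ℕ. -/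
theorem stmt5 (n m : ℕ) (Δt : ℝ)
    (ψ : (Fin n → ℝ) → (Fin m → ℝ)) (φ : (Fin m → ℝ) → (Fin n → ℝ))
    (g : (Fin m → ℝ) → (Fin m → ℝ))
    (F : (Fin n → ℝ) → (Fin n → ℝ))
    (hFdef : ∀ x, F x = x + Δt • φ (ψ x))
    (hcond1 : ∀ x, ψ (F x) = g (ψ x))
    (a b : Fin n → ℝ) (hab : ψ a = ψ b) :
    ∀ k : ℕ, F^[k] a - F^[k] b = a - b := by
  have key : ∀ k : ℕ, ψ (F^[k] a) = ψ (F^[k] b) ∧ F^[k] a - F^[k] b = a - b := by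
    intro k
    induction k with
    | zero => exact ⟨hab, rfl⟩
    | succ k ih =>
      obtain ⟨h1, h2⟩ := ih
      constructor
      · rw [Function.iterate_succ_apply', Function.iterate_succ_apply',
          hcond1, hcond1, h1]
      · rw [Function.iterate_succ_apply', Function.iterate_succ_apply',
          hFdef, hFdef, h1, add_sub_add_right_eq_sub]
        exact h2
  exact fun k => (key k).2
end

section
/- Let n m : ℕ, Δt : ℝ, let K ⊆ (Fin n → ℝ) be a nonempty compact set, let ψ : (Fin n → ℝ) → (Fin m → ℝ) be continuous on K, φ : (Fin m → ℝ) → (Fin n → ℝ), g : (Fin m → ℝ) → (Fin m → ℝ), x_g ∈ K, y_g : Fin m → ℝ. Define F(x) = x + Δt • φ(ψ(x)) and assume F(K) ⊆ K. Assume (i) for every y the iterates g^[k](y) converge to y_g, (ii) ψ(F(x)) = g(ψ(x)) for every x ∈ K, and (iii) for every x ∈ K, ψ(x) = y_g implies x = x_g. Then ψ is injective on K: for all a b ∈ K, ψ(a) = ψ(b) implies a = b. -/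
open Filter Topology

theorem stmt6 (n m : ℕ) (Δt : ℝ) (K : Set (Fin n → ℝ)) (hKne : K.Nonempty)
    (hKc : IsCompact K)
    (ψ : (Fin n → ℝ) → (Fin m → ℝ)) (hψ : ContinuousOn ψ K)
    (φ : (Fin m → ℝ) → (Fin n → ℝ))
    (g : (Fin m → ℝ) → (Fin m → ℝ)) (x_g : Fin n → ℝ) (hxg : x_g ∈ K)
    (y_g : Fin m → ℝ)
    (F : (Fin n → ℝ) → (Fin n → ℝ))
    (hFdef : ∀ x, F x = x + Δt • φ (ψ x))
    (hF : Set.MapsTo F K K)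
    (hg : ∀ y : Fin m → ℝ, Tendsto (fun k => g^[k] y) atTop (𝓝 y_g))
    (hcond1 : ∀ x ∈ K, ψ (F x) = g (ψ x))
    (hcond2 : ∀ x ∈ K, ψ x = y_g → x = x_g) :
    ∀ a ∈ K, ∀ b ∈ K, ψ a = ψ b → a = b := by
  intro a ha b hb hab
  have hmemA : ∀ k, F^[k] a ∈ K := fun k => by
    induction k with
    | zero => simpa using ha
    | succ k ih => rw [Function.iterate_succ_apply']; exact hF ih
  have hmemB : ∀ k, F^[k] b ∈ K := fun k => by
    induction k with
    | zero => simpa using hb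
    | succ k ih => rw [Function.iterate_succ_apply']; exact hF ih
  -- main invariant
  have main : ∀ k, ψ (F^[k] a) = g^[k] (ψ a) ∧ ψ (F^[k] b) = g^[k] (ψ a) ∧
      F^[k] a - F^[k] b = a - b := by
    intro k
    induction k with
    | zero => simpa using hab.symm
    | succ k ih =>
      obtain ⟨h1, h2, h3⟩ := ih
      have e1 : ψ (F^[k+1] a) = g^[k+1] (ψ a) := by
        rw [Function.iterate_succ_apply', Function.iterate_succ_apply',
          hcond1 _ (hmemA k), h1]
      have e2 : ψ (F^[k+1] b) = g^[k+1] (ψ a) := by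
        rw [Function.iterate_succ_apply', Function.iterate_succ_apply',
          hcond1 _ (hmemB k), h2]
      refine ⟨e1, e2, ?_⟩
      rw [Function.iterate_succ_apply', Function.iterate_succ_apply' (f := F) (x := b),
        hFdef, hFdef, h1.trans h2.symm]
      abel_nf
      simpa [sub_eq_add_neg] using h3
  -- extract convergent subsequence of orbit of a
  obtain ⟨x, hxK, σ, hσ, hσlim⟩ := hKc.tendsto_subseq hmemA
  -- orbit of b along subsequence converges to x - (a - b)
  have hblim : Tendsto (fun i => F^[σ i] b) atTop (𝓝 (x - (a - b))) := by
    have : ∀ i, F^[σ i] b = F^[σ i] a - (a - b) := by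
      intro i
      have := (main (σ i)).2.2
      linear_combination (norm := module) -this
    simp only [this]
    exact hσlim.sub tendsto_const_nhds
  have hxK' : x - (a - b) ∈ K := hKc.isClosed.mem_of_tendsto hblim
    (Eventually.of_forall fun i => hmemB (σ i))
  -- ψ x = y_g
  have hglim : Tendsto (fun i => g^[σ i] (ψ a)) atTop (𝓝 y_g) :=
    (hg (ψ a)).comp hσ.tendsto_atTop
  have hψx : ψ x = y_g := by
    have h1 : Tendsto (fun i => ψ (F^[σ i] a)) atTop (𝓝 (ψ x)) :=
      ((hψ x hxK).tendsto).comp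
        (tendsto_nhdsWithin_of_tendsto_nhds_of_eventually_within _ hσlim
          (Eventually.of_forall fun i => hmemA (σ i)))
    have h2 : Tendsto (fun i => ψ (F^[σ i] a)) atTop (𝓝 y_g) := by
      have : (fun i => ψ (F^[σ i] a)) = fun i => g^[σ i] (ψ a) := by
        funext i; exact (main (σ i)).1
      rw [this]; exact hglim
    exact tendsto_nhds_unique h1 h2
  have hψx' : ψ (x - (a - b)) = y_g := by
    have h1 : Tendsto (fun i => ψ (F^[σ i] b)) atTop (𝓝 (ψ (x - (a - b)))) :=
      ((hψ _ hxK').tendsto).comp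
        (tendsto_nhdsWithin_of_tendsto_nhds_of_eventually_within _ hblim
          (Eventually.of_forall fun i => hmemB (σ i)))
    have h2 : Tendsto (fun i => ψ (F^[σ i] b)) atTop (𝓝 y_g) := by
      have : (fun i => ψ (F^[σ i] b)) = fun i => g^[σ i] (ψ a) := by
        funext i; exact (main (σ i)).2.1
      rw [this]; exact hglim
    exact tendsto_nhds_unique h1 h2
  have e1 : x = x_g := hcond2 x hxK hψx
  have e2 : x - (a - b) = x_g := hcond2 _ hxK' hψx'
  have : a - b = 0 := by
    have := e1 ▸ e2
    linear_combination (norm := module) -this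
  linear_combination (norm := module) this
end

section
/- Let n m : ℕ, Δt : ℝ, let K ⊆ (Fin n → ℝ) be a nonempty compact set, let ψ : (Fin n → ℝ) → (Fin m → ℝ) be continuous on K, φ : (Fin m → ℝ) → (Fin n → ℝ), g : (Fin m → ℝ) → (Fin m → ℝ), x_g ∈ K, y_g : Fin m → ℝ. Define F(x) = x + Δt • φ(ψ(x)) and assume F(K) ⊆ K. Assume (i) for every y the iterates g^[k](y) converge to y_g, (ii) ψ(F(x)) = g(ψ(x)) for every x ∈ K, and (iii) for every x ∈ K, ψ(x) = y_g implies x = x_g. Then the restriction of ψ to K is a homeomorphism from K onto its image ψ(K) ⊆ (Fin m → ℝ). -/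
open Filter Topology

theorem stmt7 (n m : ℕ) (Δt : ℝ) (K : Set (Fin n → ℝ)) (hKne : K.Nonempty)
    (hKc : IsCompact K)
    (ψ : (Fin n → ℝ) → (Fin m → ℝ)) (hψ : ContinuousOn ψ K)
    (φ : (Fin m → ℝ) → (Fin n → ℝ))
    (g : (Fin m → ℝ) → (Fin m → ℝ)) (x_g : Fin n → ℝ) (hxg : x_g ∈ K)
    (y_g : Fin m → ℝ)
    (F : (Fin n → ℝ) → (Fin n → ℝ))
    (hFdef : ∀ x, F x = x + Δt • φ (ψ x))
    (hF : Set.MapsTo F K K)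
    (hg : ∀ y : Fin m → ℝ, Tendsto (fun k => g^[k] y) atTop (𝓝 y_g))
    (hcond1 : ∀ x ∈ K, ψ (F x) = g (ψ x))
    (hcond2 : ∀ x ∈ K, ψ x = y_g → x = x_g) :
    ∃ e : K ≃ₜ (ψ '' K), ∀ x : K, (e x : Fin m → ℝ) = ψ (x : Fin n → ℝ) := by
  -- iterates stay in K
  have hiter : ∀ x ∈ K, ∀ k, F^[k] x ∈ K := fun x hx k => hF.iterate k hx
  -- semiconjugacy along iterates
  have hsemi : ∀ x ∈ K, ∀ k, ψ (F^[k] x) = g^[k] (ψ x) := by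
    intro x hx k
    induction k with
    | zero => simp
    | succ k ih =>
      rw [Function.iterate_succ_apply', Function.iterate_succ_apply',
        hcond1 _ (hiter x hx k), ih]
  -- injectivity of ψ on K
  have hinj : Set.InjOn ψ K := by
    intro x hx x' hx' hψeq
    -- difference of iterates is constant
    have hdiff : ∀ k, F^[k] x - F^[k] x' = x - x' := by
      intro k
      induction k with
      | zero => simp
      | succ k ih =>
        have hψk : ψ (F^[k] x) = ψ (F^[k] x') := by
          rw [hsemi x hx k, hsemi x' hx' k, hψeq]
        rw [Function.iterate_succ_apply', Function.iterate_succ_apply',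
          hFdef, hFdef, hψk, add_sub_add_comm, sub_self, add_zero, ih]
    -- extract convergent subsequence of iterates of x
    obtain ⟨a, haK, s1, hs1, hlim1⟩ :=
      hKc.tendsto_subseq (x := fun k => F^[k] x) (fun k => hiter x hx k)
    obtain ⟨b, hbK, s2, hs2, hlim2⟩ :=
      hKc.tendsto_subseq (x := fun j => F^[s1 j] x') (fun j => hiter x' hx' _)
    have hlim1' : Tendsto (fun j => F^[s1 (s2 j)] x) atTop (𝓝 a) :=
      hlim1.comp hs2.tendsto_atTop
    -- limits map to y_g
    have hs12 : Tendsto (fun j => s1 (s2 j)) atTop atTop :=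
      hs1.tendsto_atTop.comp hs2.tendsto_atTop
    have hψa : ψ a = y_g := by
      have h1 : Tendsto (fun j => ψ (F^[s1 (s2 j)] x)) atTop (𝓝 (ψ a)) :=
        (hψ a haK).tendsto.comp
          (tendsto_nhdsWithin_of_tendsto_nhds_of_eventually_within _ hlim1'
            (Eventually.of_forall fun j => hiter x hx _))
      have h2 : Tendsto (fun j => ψ (F^[s1 (s2 j)] x)) atTop (𝓝 y_g) := by
        have := (hg (ψ x)).comp hs12
        simpa [Function.comp_def, hsemi x hx] using this
      exact tendsto_nhds_unique h1 h2
    have hψb : ψ b = y_g := by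
      have hlim2' : Tendsto (fun j => F^[s1 (s2 j)] x') atTop (𝓝 b) := hlim2
      have h1 : Tendsto (fun j => ψ (F^[s1 (s2 j)] x')) atTop (𝓝 (ψ b)) :=
        (hψ b hbK).tendsto.comp
          (tendsto_nhdsWithin_of_tendsto_nhds_of_eventually_within _ hlim2'
            (Eventually.of_forall fun j => hiter x' hx' _))
      have h2 : Tendsto (fun j => ψ (F^[s1 (s2 j)] x')) atTop (𝓝 y_g) := by
        have := (hg (ψ x')).comp hs12
        simpa [Function.comp_def, hsemi x' hx'] using this
      exact tendsto_nhds_unique h1 h2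
    have ha : a = x_g := hcond2 a haK hψa
    have hb : b = x_g := hcond2 b hbK hψb
    have hconst : Tendsto (fun j => F^[s1 (s2 j)] x - F^[s1 (s2 j)] x') atTop
        (𝓝 (a - b)) := hlim1'.sub hlim2
    have : Tendsto (fun _ : ℕ => x - x') atTop (𝓝 (a - b)) := by
      simpa [hdiff] using hconst
    have hxx : x - x' = a - b := tendsto_nhds_unique tendsto_const_nhds this
    have : x - x' = 0 := by rw [hxx, ha, hb, sub_self]
    exact sub_eq_zero.mp this
  -- build the homeomorphism
  haveI : CompactSpace K := isCompact_iff_compactSpace.mp hKc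
  let eq : K ≃ (ψ '' K) := Equiv.Set.imageOfInjOn ψ K hinj
  have hcont : Continuous eq := by
    apply Continuous.subtype_mk
    exact hψ.restrict
  exact ⟨Continuous.homeoOfEquivCompactToT2 hcont, fun x => rfl⟩
end

section
/- Let m : ℕ, Δt ε : ℝ with Δt > 0 and ε > 0, let y_g : Fin m → ℝ, and let α : (Fin m → ℝ) → (Fin m → ℝ) satisfy ε ≤ α(y) i ≤ 2/Δt - ε for all y and i. Define T : (Fin m → ℝ) → (Fin m → ℝ) by T(y) i = y i + Δt * (α(y) i * (y_g i - y i)). Then for every y : Fin m → ℝ, every k : ℕ, and every i : Fin m, |T^[k](y) i - y_g i| ≤ (1 - ε*Δt)^k * |y i - y_g i|; in particular T^[k](y) converges to y_g as k → ∞. -/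
open Filter Topology

theorem stmt9 (m : ℕ) (Δt ε : ℝ) (hΔt : 0 < Δt) (hε : 0 < ε)
    (y_g : Fin m → ℝ)
    (α : (Fin m → ℝ) → (Fin m → ℝ))
    (hα : ∀ y i, ε ≤ α y i ∧ α y i ≤ 2 / Δt - ε)
    (T : (Fin m → ℝ) → (Fin m → ℝ))
    (hT : ∀ y i, T y i = y i + Δt * (α y i * (y_g i - y i))) :
    ∀ y : Fin m → ℝ,
      (∀ (k : ℕ) (i : Fin m),
        |T^[k] y i - y_g i| ≤ (1 - ε * Δt) ^ k * |y i - y_g i|) ∧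
      Tendsto (fun k => T^[k] y) atTop (𝓝 y_g) := by
  have hfac : ∀ (i : Fin m), ε * Δt ≤ 1 := by
    intro i
    have h := hα 0 i
    have h2 : 2 * ε ≤ 2 / Δt := by linarith [h.1, h.2]
    have h3 : 2 * ε * Δt ≤ 2 := (le_div_iff₀ hΔt).mp h2
    linarith
  have key : ∀ (z : Fin m → ℝ) (i : Fin m),
      |T z i - y_g i| ≤ (1 - ε * Δt) * |z i - y_g i| := by
    intro z i
    have heq : T z i - y_g i = (1 - Δt * α z i) * (z i - y_g i) := by
      rw [hT]; ring
    rw [heq, abs_mul]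
    have h := hα z i
    have hb : |1 - Δt * α z i| ≤ 1 - ε * Δt := by
      rw [abs_le]
      constructor
      · have : Δt * α z i ≤ Δt * (2 / Δt - ε) :=
          mul_le_mul_of_nonneg_left h.2 hΔt.le
        have h2 : Δt * (2 / Δt - ε) = 2 - Δt * ε := by
          field_simp
        nlinarith
      · nlinarith [mul_le_mul_of_nonneg_left h.1 hΔt.le]
    exact mul_le_mul_of_nonneg_right hb (abs_nonneg _)
  intro y
  have hbound : ∀ (k : ℕ) (i : Fin m),
      |T^[k] y i - y_g i| ≤ (1 - ε * Δt) ^ k * |y i - y_g i| := by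
    intro k
    induction k with
    | zero => intro i; simp
    | succ n ih =>
      intro i
      rw [Function.iterate_succ_apply']
      calc |T (T^[n] y) i - y_g i| ≤ (1 - ε * Δt) * |T^[n] y i - y_g i| := key _ i
        _ ≤ (1 - ε * Δt) * ((1 - ε * Δt) ^ n * |y i - y_g i|) := by
            apply mul_le_mul_of_nonneg_left (ih i)
            nlinarith [hfac i, mul_pos hε hΔt]
        _ = (1 - ε * Δt) ^ (n + 1) * |y i - y_g i| := by ring
  refine ⟨hbound, ?_⟩
  rw [tendsto_pi_nhds]
  intro i
  have h01 : 0 ≤ 1 - ε * Δt := by linarith [hfac i]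
  have hlt : 1 - ε * Δt < 1 := by nlinarith [mul_pos hε hΔt]
  have hg : Tendsto (fun k : ℕ => (1 - ε * Δt) ^ k * |y i - y_g i|) atTop (𝓝 0) := by
    simpa using (tendsto_pow_atTop_nhds_zero_of_lt_one h01 hlt).mul_const |y i - y_g i|
  have habs : Tendsto (fun k : ℕ => |T^[k] y i - y_g i|) atTop (𝓝 0) :=
    squeeze_zero (fun k => abs_nonneg _) (fun k => hbound k i) hg
  have := tendsto_zero_iff_abs_tendsto_zero (fun k : ℕ => T^[k] y i - y_g i) |>.mpr habs
  have h2 := this.add_const (y_g i)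
  simpa using h2
end

section
/- Let m : ℕ, let y_g : Fin m → ℝ, let α : (Fin m → ℝ) → (Fin m → ℝ) satisfy α(z) i > 0 for all z and i, and let y : ℝ → (Fin m → ℝ) be such that for every i : Fin m and t : ℝ, the function t ↦ y(t) i is differentiable with derivative equal to -(α(y(t)) i) * (y(t) i - y_g i). Then the function V : ℝ → ℝ defined by V(t) = ∑ i, (y(t) i - y_g i)^2 is antitone (nonincreasing) on ℝ. -/
theorem stmt11 (m : ℕ) (y_g : Fin m → ℝ)
    (α : (Fin m → ℝ) → (Fin m → ℝ)) (hα : ∀ z i, 0 < α z i)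
    (y : ℝ → (Fin m → ℝ))
    (hy : ∀ (i : Fin m) (t : ℝ),
      HasDerivAt (fun s => y s i) (-(α (y t) i) * (y t i - y_g i)) t) :
    Antitone (fun t : ℝ => ∑ i, (y t i - y_g i) ^ 2) := by
  have hV : ∀ t, HasDerivAt (fun s : ℝ => ∑ i, (y s i - y_g i) ^ 2)
      (∑ i, 2 * (y t i - y_g i) * (-(α (y t) i) * (y t i - y_g i))) t := by
    intro t
    apply HasDerivAt.fun_sum
    intro i _
    have h : HasDerivAt (fun s => (y s i - y_g i) ^ 2)
        (((2 : ℕ) : ℝ) * (y t i - y_g i) ^ (2 - 1) * (-(α (y t) i) * (y t i - y_g i))) t :=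
      ((hy i t).sub_const (y_g i)).fun_pow 2
    convert h using 1
    · rfl
    · rfl
    · ring
  apply antitone_of_deriv_nonpos
  · exact fun t => (hV t).differentiableAt
  · intro t
    rw [(hV t).deriv]
    apply Finset.sum_nonpos
    intro i _
    have := (hα (y t) i).le
    nlinarith [sq_nonneg (y t i - y_g i), mul_nonneg this (sq_nonneg (y t i - y_g i))]
end

section
/- Let m : ℕ, ε : ℝ with ε > 0, let y_g : Fin m → ℝ, let α : (Fin m → ℝ) → (Fin m → ℝ) satisfy α(z) i ≥ ε for all z and i, and let y : ℝ → (Fin m → ℝ) be such that for every i : Fin m and t : ℝ, the function t ↦ y(t) i is differentiable with derivative equal to -(α(y(t)) i) * (y(t) i - y_g i). Then for every t ≥ 0, ∑ i, (y(t) i - y_g i)^2 ≤ Real.exp (-2*ε*t) * ∑ i, (y(0) i - y_g i)^2; in particular y(t) converges to y_g as t → ∞. -/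
open Filter Topology

theorem stmt12 (m : ℕ) (ε : ℝ) (hε : 0 < ε) (y_g : Fin m → ℝ)
    (α : (Fin m → ℝ) → (Fin m → ℝ)) (hα : ∀ z i, ε ≤ α z i)
    (y : ℝ → (Fin m → ℝ))
    (hy : ∀ (i : Fin m) (t : ℝ),
      HasDerivAt (fun s => y s i) (-(α (y t) i) * (y t i - y_g i)) t) :
    (∀ t : ℝ, 0 ≤ t →
      ∑ i, (y t i - y_g i) ^ 2 ≤ Real.exp (-2 * ε * t) * ∑ i, (y 0 i - y_g i) ^ 2) ∧
    Tendsto y atTop (𝓝 y_g) := by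
  set V : ℝ → ℝ := fun t => ∑ i, (y t i - y_g i) ^ 2 with hVdef
  have hVd : ∀ t, HasDerivAt V
      (∑ i, 2 * (y t i - y_g i) * (-(α (y t) i) * (y t i - y_g i))) t := by
    intro t
    refine HasDerivAt.fun_sum (fun i _ => ?_)
    have h1 : HasDerivAt (fun s => y s i - y_g i) (-(α (y t) i) * (y t i - y_g i)) t :=
      (hy i t).sub_const _
    have := h1.fun_pow 2
    simpa [pow_one, mul_comm, mul_assoc, mul_left_comm] using this
  set g : ℝ → ℝ := fun t => Real.exp (2 * ε * t) * V t with hgdef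
  have hgd : ∀ t, HasDerivAt g
      (Real.exp (2 * ε * t) *
        (2 * ε * V t + ∑ i, 2 * (y t i - y_g i) * (-(α (y t) i) * (y t i - y_g i)))) t := by
    intro t
    have he : HasDerivAt (fun s => Real.exp (2 * ε * s)) (2 * ε * Real.exp (2 * ε * t)) t := by
      have h0 : HasDerivAt (fun s : ℝ => 2 * ε * s) (2 * ε) t := by
        simpa using (hasDerivAt_id t).const_mul (2 * ε)
      simpa [mul_comm] using h0.exp
    have := he.fun_mul (hVd t)
    refine this.congr_deriv ?_
    ring
  have hsum : ∀ t, (∑ i, 2 * (y t i - y_g i) * (-(α (y t) i) * (y t i - y_g i)))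
      ≤ -(2 * ε) * V t := by
    intro t
    rw [hVdef]
    simp only [Finset.mul_sum]
    refine Finset.sum_le_sum fun i _ => ?_
    nlinarith [hα (y t) i, sq_nonneg (y t i - y_g i)]
  have hg' : ∀ t, deriv g t ≤ 0 := by
    intro t
    rw [(hgd t).deriv]
    have h1 : 2 * ε * V t + (∑ i, 2 * (y t i - y_g i) * (-(α (y t) i) * (y t i - y_g i))) ≤ 0 := by
      have := hsum t; linarith
    exact mul_nonpos_of_nonneg_of_nonpos (Real.exp_pos _).le h1
  have hanti : Antitone g :=
    antitone_of_deriv_nonpos (fun t => (hgd t).differentiableAt) hg'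
  have key : ∀ t : ℝ, 0 ≤ t → V t ≤ Real.exp (-2 * ε * t) * V 0 := by
    intro t ht
    have h1 : g t ≤ g 0 := hanti ht
    have h2 : Real.exp (2 * ε * t) * V t ≤ V 0 := by
      simpa [hgdef] using h1
    have h3 : Real.exp (-2 * ε * t) * (Real.exp (2 * ε * t) * V t)
        ≤ Real.exp (-2 * ε * t) * V 0 :=
      mul_le_mul_of_nonneg_left h2 (Real.exp_pos _).le
    have h4 : Real.exp (-2 * ε * t) * Real.exp (2 * ε * t) = 1 := by
      rw [← Real.exp_add]; ring_nf; exact Real.exp_zero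
    calc V t = Real.exp (-2 * ε * t) * Real.exp (2 * ε * t) * V t := by rw [h4]; ring
    _ ≤ Real.exp (-2 * ε * t) * V 0 := by rw [mul_assoc]; exact h3
  refine ⟨key, ?_⟩
  rw [tendsto_pi_nhds]
  intro i
  have hbound : Tendsto (fun t => Real.exp (-2 * ε * t) * V 0) atTop (𝓝 0) := by
    have h1 : Tendsto (fun t : ℝ => 2 * ε * t) atTop atTop :=
      Tendsto.const_mul_atTop (by linarith) tendsto_id
    have h2 : Tendsto (fun t : ℝ => Real.exp (-2 * ε * t)) atTop (𝓝 0) := by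
      have h2' : Tendsto (fun t : ℝ => Real.exp (-(2 * ε * t))) atTop (𝓝 0) :=
        Real.tendsto_exp_neg_atTop_nhds_zero.comp h1
      simpa only [neg_mul] using h2'
    simpa using h2.mul_const (V 0)
  have hsq : Tendsto (fun t => (y t i - y_g i) ^ 2) atTop (𝓝 0) := by
    refine squeeze_zero' (Eventually.of_forall fun t => sq_nonneg _) ?_ hbound
    filter_upwards [eventually_ge_atTop (0 : ℝ)] with t ht
    calc (y t i - y_g i) ^ 2 ≤ V t :=
          Finset.single_le_sum (fun j _ => sq_nonneg (y t j - y_g j)) (Finset.mem_univ i)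
    _ ≤ Real.exp (-2 * ε * t) * V 0 := key t ht
  have habs : Tendsto (fun t => |y t i - y_g i|) atTop (𝓝 0) := by
    have := hsq.sqrt
    simpa [Real.sqrt_sq_eq_abs] using this
  rw [tendsto_iff_dist_tendsto_zero]
  simpa [Real.dist_eq] using habs
end

section
/- Let n m : ℕ, let K ⊆ (Fin n → ℝ) be a nonempty compact set, let F : (Fin n → ℝ) → (Fin n → ℝ) satisfy F(K) ⊆ K, let ψ : (Fin n → ℝ) → (Fin m → ℝ) be continuous on K, let g : (Fin m → ℝ) → (Fin m → ℝ), let x_g ∈ K and y_g : Fin m → ℝ. Assume: (i) for every y : Fin m → ℝ, the iterates g^[k](y) converge to y_g as k → ∞; (ii) g(y_g) = y_g; (iii) ψ(F(x)) = g(ψ(x)) for every x ∈ K (stability condition 1); (iv) for every x ∈ K with x ≠ x_g, ψ(F(x)) ≠ ψ(x) (the surrogate separation condition). Then for every x ∈ K, the iterates F^[k](x) converge to x_g as k → ∞. -/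
open Filter Topology

theorem stmt13 (n m : ℕ) (K : Set (Fin n → ℝ)) (hKne : K.Nonempty) (hKc : IsCompact K)
    (F : (Fin n → ℝ) → (Fin n → ℝ)) (hF : Set.MapsTo F K K)
    (ψ : (Fin n → ℝ) → (Fin m → ℝ)) (hψ : ContinuousOn ψ K)
    (g : (Fin m → ℝ) → (Fin m → ℝ)) (x_g : Fin n → ℝ) (hxg : x_g ∈ K)
    (y_g : Fin m → ℝ)
    (hg : ∀ y : Fin m → ℝ, Tendsto (fun k => g^[k] y) atTop (𝓝 y_g))
    (hfix : g y_g = y_g)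
    (hcond1 : ∀ x ∈ K, ψ (F x) = g (ψ x))
    (hsep : ∀ x ∈ K, x ≠ x_g → ψ (F x) ≠ ψ x) :
    ∀ x ∈ K, Tendsto (fun k => F^[k] x) atTop (𝓝 x_g) := by
  intro x hx
  -- orbit stays in K
  have horb : ∀ k, F^[k] x ∈ K := by
    intro k
    induction k with
    | zero => simpa using hx
    | succ k ih => rw [Function.iterate_succ_apply']; exact hF ih
  -- semiconjugacy along the orbit
  have hconj : ∀ k, ψ (F^[k] x) = g^[k] (ψ x) := by
    intro k
    induction k with
    | zero => simp
    | succ k ih =>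
      rw [Function.iterate_succ_apply', Function.iterate_succ_apply',
        hcond1 _ (horb k), ih]
  have hψlim : Tendsto (fun k => ψ (F^[k] x)) atTop (𝓝 y_g) := by
    simpa only [hconj] using hg (ψ x)
  -- any point of K where ψ equals y_g must be x_g
  have key : ∀ z ∈ K, ψ z = y_g → z = x_g := by
    intro z hz hψz
    by_contra h
    exact hsep z hz h (by rw [hcond1 z hz, hψz, hfix])
  -- prove convergence by contradiction via compactness
  by_contra hnot
  obtain ⟨U, hUnhds, hfreq⟩ := not_tendsto_iff_exists_frequently_notMem.mp hnot
  obtain ⟨φ, hφmono, hφ⟩ := Filter.extraction_of_frequently_atTop hfreq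
  -- subsequence lies in compact K, extract convergent sub-subsequence
  obtain ⟨z, hzK, σ, hσmono, hσlim⟩ :=
    hKc.tendsto_subseq (x := fun j => F^[φ j] x) (fun j => horb (φ j))
  -- ψ along the sub-subsequence tends to ψ z and to y_g
  have htend : Tendsto (fun i => ψ (F^[φ (σ i)] x)) atTop (𝓝 (ψ z)) := by
    refine ((hψ z hzK).tendsto).comp ?_
    rw [tendsto_nhdsWithin_iff]
    exact ⟨hσlim, Filter.Eventually.of_forall fun i => horb _⟩
  have htend' : Tendsto (fun i => ψ (F^[φ (σ i)] x)) atTop (𝓝 y_g) :=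
    hψlim.comp ((hφmono.comp hσmono).tendsto_atTop)
  have hz_eq : z = x_g := key z hzK (tendsto_nhds_unique htend htend')
  -- but z is a limit of points outside U, contradiction
  have : ∀ᶠ i in atTop, F^[φ (σ i)] x ∈ U := by
    rw [hz_eq] at hσlim
    exact hσlim.eventually_mem hUnhds
  rcases this.exists with ⟨i, hi⟩
  exact hφ (σ i) hi
end
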